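/- Let 0 < x < 1, 0 < q < 1 and α > 0, and set X = (q + α·x)/(1 + α). Then K₂(x|q) − (1 + 1/α)·K₂(X|q) = K₂(x|X) + (1/α)·K₂(q|X). -/

import Mathlib

/-- The binary Kullback–Leibler divergence
`K₂(x|q) = x·ln(x/q) + (1-x)·ln((1-x)/(1-q))`
(with the convention `0·ln 0 = 0`, realized by `Real.log 0 = 0`). -/
noncomputable def K2 (x q : ℝ) : ℝ :=
  x * Real.log (x / q) + (1 - x) * Real.log ((1 - x) / (1 - q))

/-- Decomposition of the combination of Kullback–Leibler divergences appearing in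
the bosonic tail estimate: with `X = (q + α·x)/(1 + α)`,
`K₂(x|q) - (1 + 1/α)·K₂(X|q) = K₂(x|X) + (1/α)·K₂(q|X)`. -/
theorem KL_bosonic_decomposition
    (x q α : ℝ) (hx0 : 0 < x) (hx1 : x < 1) (hq0 : 0 < q) (hq1 : q < 1) (hα : 0 < α)
    (X : ℝ) (hX : X = (q + α * x) / (1 + α)) :
    K2 x q - (1 + 1 / α) * K2 X q = K2 x X + (1 / α) * K2 q X := by
  have hα1 : (0:ℝ) < 1 + α := by linarith
  have hX0 : 0 < X := by
    rw [hX]; apply div_pos _ hα1; nlinarith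
  have hX1 : X < 1 := by
    rw [hX, div_lt_one hα1]; nlinarith
  have hrel : α * x - (1 + α) * X + q = 0 := by
    rw [hX]; field_simp; ring
  have hx0' := hx0.ne'
  have hq0' := hq0.ne'
  have hX0' := hX0.ne'
  have hx1' : (1 - x) ≠ 0 := by linarith
  have hq1' : (1 - q) ≠ 0 := by linarith
  have hX1' : (1 - X) ≠ 0 := by linarith
  simp only [K2, Real.log_div hx0' hq0', Real.log_div hx1' hq1',
    Real.log_div hX0' hq0', Real.log_div hX1' hq1',
    Real.log_div hx0' hX0', Real.log_div hx1' hX1',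
    Real.log_div hq0' hX0', Real.log_div hq1' hX1']
  have hαne := hα.ne'
  field_simp
  linear_combination (Real.log X - Real.log q + Real.log (1 - q) - Real.log (1 - X)) * hrel
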